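/- (Exact Blackwell condition) In the setting of the approximate (Φ,f)-Blackwell bound, if the estimates are exact (R̃ = R), so that L is a fixed point of M(q) = Σ_φ f(R)_φ [φ](q) / Σ_φ f(R)_φ, then f(R) · E_{a∼L}[ρ^Φ(a,r)] = 0 for every reward function r. -/
import Mathlib


open Finset

/-- Exact Blackwell condition: if the estimates are exact, i.e. `L`
is a fixed point of the matrix built from `f(R)` itself, then
`f(R) · E_{a∼L}[ρ^Φ(a,r)] = 0` for every reward function `r`. -/
theorem exact_blackwell_condition
    {A ι : Type*} [Fintype A] [Fintype ι]
    (U : ℝ) (hU : 0 ≤ U)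
    (φ : ι → A → A → ℝ) (hφ : ∀ i a, φ i a ∈ stdSimplex ℝ A)
    (f : (ι → ℝ) → ι → ℝ) (hf : ∀ v i, 0 ≤ f v i)
    (R : ι → ℝ)
    (hden : 0 < ∑ i, f R i)
    (L : A → ℝ) (hL : L ∈ stdSimplex ℝ A)
    (hfix : ∀ a, (∑ i, f R i * (∑ b, L b * φ i b a)) / (∑ i, f R i) = L a)
    (r : A → ℝ) (hr : ∀ a, r a ∈ Set.Icc 0 U) :
    ∑ i, f R i * (∑ a, L a * ((∑ s, φ i a s * r s) - r a)) = 0 := by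
  have hkey : ∀ s, ∑ i, f R i * (∑ b, L b * φ i b s) = (∑ i, f R i) * L s := by
    intro s
    have h := hfix s
    rw [div_eq_iff hden.ne'] at h
    linarith
  have hexp : ∑ i, f R i * (∑ a, L a * ((∑ s, φ i a s * r s) - r a))
      = (∑ s, r s * (∑ i, f R i * (∑ b, L b * φ i b s)))
        - (∑ i, f R i) * (∑ a, L a * r a) := by
    simp only [mul_sub, Finset.mul_sum, Finset.sum_sub_distrib, Finset.sum_mul]
    congr 1
    · calc ∑ i, ∑ a, ∑ s, f R i * (L a * (φ i a s * r s))
          = ∑ a, ∑ i, ∑ s, f R i * (L a * (φ i a s * r s)) := Finset.sum_comm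
        _ = ∑ a, ∑ s, ∑ i, f R i * (L a * (φ i a s * r s)) :=
            Finset.sum_congr rfl fun a _ => Finset.sum_comm
        _ = ∑ s, ∑ a, ∑ i, f R i * (L a * (φ i a s * r s)) := Finset.sum_comm
        _ = ∑ s, ∑ i, ∑ a, f R i * (L a * (φ i a s * r s)) :=
            Finset.sum_congr rfl fun s _ => Finset.sum_comm
        _ = ∑ s, ∑ i, ∑ b, r s * (f R i * (L b * φ i b s)) :=
            Finset.sum_congr rfl fun s _ => Finset.sum_congr rfl fun i _ =>
              Finset.sum_congr rfl fun a _ => by ring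
    · exact Finset.sum_comm
  rw [hexp]
  have : ∑ s, r s * ((∑ i, f R i) * L s) = (∑ i, f R i) * (∑ a, L a * r a) := by
    rw [Finset.mul_sum]
    exact Finset.sum_congr rfl fun s _ => by ring
  simp only [hkey, this, sub_self]
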